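/- Suppose there exist a compact plane set X and a nondegenerate closed interval J ⊆ ℝ with J ⊆ X such that R(X) is not regular but every point of X \ J is a point of continuity for R(X). Then: (a) for every nonempty compact K ⊆ X \ J, R(K) is regular; (b) J is not clopen in X; (c) X ≠ J. -/

import Mathlib

open Set Metric Filter Topology

noncomputable section

/-- `g` is (on `K`) a rational function with no poles on `K`. -/
def RatOn (K : Set ℂ) (g : ℂ → ℂ) : Prop :=
  ∃ p q : Polynomial ℂ, (∀ z ∈ K, q.eval z ≠ 0) ∧ ∀ z ∈ K, g z = p.eval z / q.eval z

/-- `f ∈ R(K)`: uniform limit on `K` of rational functions with poles off `K`. -/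
def Rmem (K : Set ℂ) (f : ℂ → ℂ) : Prop :=
  ContinuousOn f K ∧ ∀ ε > 0, ∃ g, RatOn K g ∧ ∀ z ∈ K, ‖f z - g z‖ ≤ ε

/-- `f` vanishes on a `K`-neighbourhood of `x` (membership in the ideal `J_x^K`). -/
def VanishNear (K : Set ℂ) (x : ℂ) (f : ℂ → ℂ) : Prop :=
  ∃ U, IsOpen U ∧ x ∈ U ∧ ∀ z ∈ K ∩ U, f z = 0

/-- `x` is an R-point for `R(K)`: `J_x^K ⊄ M_y^K` for all `y ∈ K \ {x}`. -/
def RPoint (K : Set ℂ) (x : ℂ) : Prop :=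
  ∀ y ∈ K, y ≠ x → ∃ f, Rmem K f ∧ VanishNear K x f ∧ f y ≠ 0

/-- `x` is a point of continuity for `R(K)`: `J_y^K ⊄ M_x^K` for all `y ∈ K \ {x}`. -/
def PointOfCont (K : Set ℂ) (x : ℂ) : Prop :=
  ∀ y ∈ K, y ≠ x → ∃ f, Rmem K f ∧ VanishNear K y f ∧ f x ≠ 0

/-- `R(K)` is regular. -/
def RegularR (K : Set ℂ) : Prop :=
  ∀ F ⊆ K, IsClosed F → ∀ y ∈ K \ F, ∃ f, Rmem K f ∧ f y = 1 ∧ ∀ z ∈ F, f z = 0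

/-- `S` is relatively clopen in `X`. -/
def RelClopen (X S : Set ℂ) : Prop :=
  (∃ U, IsOpen U ∧ S = X ∩ U) ∧ (∃ C, IsClosed C ∧ S = X ∩ C)

lemma ratOn_const (K : Set ℂ) (c : ℂ) : RatOn K (fun _ => c) := by
  refine ⟨Polynomial.C c, 1, fun z _ => by simp, fun z _ => by simp⟩

lemma RatOn.add {K : Set ℂ} {f g : ℂ → ℂ} (hf : RatOn K f) (hg : RatOn K g) :
    RatOn K (fun z => f z + g z) := by
  obtain ⟨p1, q1, hq1, h1⟩ := hf
  obtain ⟨p2, q2, hq2, h2⟩ := hg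
  refine ⟨p1 * q2 + p2 * q1, q1 * q2, fun z hz => by
    simp [mul_ne_zero (hq1 z hz) (hq2 z hz)], fun z hz => ?_⟩
  simp only []
  rw [h1 z hz, h2 z hz]
  simp only [Polynomial.eval_add, Polynomial.eval_mul]
  rw [div_add_div _ _ (hq1 z hz) (hq2 z hz)]
  ring_nf

lemma RatOn.mul {K : Set ℂ} {f g : ℂ → ℂ} (hf : RatOn K f) (hg : RatOn K g) :
    RatOn K (fun z => f z * g z) := by
  obtain ⟨p1, q1, hq1, h1⟩ := hf
  obtain ⟨p2, q2, hq2, h2⟩ := hg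
  refine ⟨p1 * p2, q1 * q2, fun z hz => by
    simp [mul_ne_zero (hq1 z hz) (hq2 z hz)], fun z hz => ?_⟩
  simp only []
  rw [h1 z hz, h2 z hz]
  simp only [Polynomial.eval_mul]
  rw [div_mul_div_comm]

lemma ratOn_inv_sub {K : Set ℂ} {z₀ : ℂ} (c : ℂ) (h : ∀ z ∈ K, z₀ - z ≠ 0) :
    RatOn K (fun z => c / (z₀ - z)) := by
  refine ⟨Polynomial.C c, Polynomial.C z₀ - Polynomial.X, fun z hz => by
    simpa using h z hz, fun z hz => by simp⟩

lemma ratOn_sum {K : Set ℂ} {ι : Type*} (s : Finset ι) (f : ι → ℂ → ℂ)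
    (h : ∀ i ∈ s, RatOn K (f i)) : RatOn K (fun z => ∑ i ∈ s, f i z) := by
  classical
  induction s using Finset.induction with
  | empty => simpa using ratOn_const K 0
  | insert _ _ hx ih =>
    rename_i i s
    simp only [Finset.sum_insert hx]
    exact (h i (Finset.mem_insert_self i s)).add
      (ih fun j hj => h j (Finset.mem_insert_of_mem hj))

lemma rmem_const (K : Set ℂ) (c : ℂ) : Rmem K (fun _ => c) :=
  ⟨continuousOn_const, fun ε hε => ⟨_, ratOn_const K c, fun z _ => by simpa using hε.le⟩⟩

lemma Rmem.const_mul {K : Set ℂ} {f : ℂ → ℂ} (hf : Rmem K f) (c : ℂ) :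
    Rmem K (fun z => c * f z) := by
  refine ⟨continuousOn_const.mul hf.1, fun ε hε => ?_⟩
  obtain ⟨g, hg, hgf⟩ := hf.2 (ε / (norm c + 1))
    (div_pos hε (by positivity))
  refine ⟨fun z => c * g z, (ratOn_const K c).mul hg, fun z hz => ?_⟩
  have : norm (c * f z - c * g z) = norm c * norm (f z - g z) := by
    rw [← norm_mul]; ring_nf
  rw [this]
  have h1 : norm c ≤ norm c + 1 := by linarith
  have := mul_le_mul h1 (hgf z hz) (norm_nonneg _) (by positivity)
  refine this.trans (le_of_eq ?_)
  field_simp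


lemma riemann_bound (g : ℝ → ℂ) (L : ℝ)
    (hlip : ∀ s ∈ Set.Icc (0:ℝ) 1, ∀ t ∈ Set.Icc (0:ℝ) 1,
      norm (g s - g t) ≤ L * |s - t|)
    (hcont : ContinuousOn g (Set.Icc 0 1)) (n : ℕ) (hn : 0 < n) :
    norm ((∫ t in (0:ℝ)..1, g t)
      - ∑ k ∈ Finset.range n, ((n : ℂ))⁻¹ * g (k / n)) ≤ L / n := by
  have hL : 0 ≤ L := by
    have h1 := hlip 0 (by norm_num) 1 (by norm_num)
    have h0 := norm_nonneg (g 0 - g 1)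
    simpa using le_trans h0 h1
  set a : ℕ → ℝ := fun k => k / n with ha
  have hnR : (0:ℝ) < n := by exact_mod_cast hn
  have hmem : ∀ k ≤ n, a k ∈ Set.Icc (0:ℝ) 1 := by
    intro k hk
    constructor
    · positivity
    · rw [div_le_one hnR]; exact_mod_cast hk
  have hsub : ∀ k < n, Set.uIcc (a k) (a (k + 1)) ⊆ Set.Icc (0:ℝ) 1 := by
    intro k hk
    rw [Set.uIcc_of_le ((div_le_div_iff_of_pos_right hnR).2 (by push_cast; linarith))]
    intro x hx
    exact ⟨le_trans (hmem k hk.le).1 hx.1, le_trans hx.2 (hmem (k+1) hk).2⟩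
  have hintk : ∀ k < n, IntervalIntegrable g MeasureTheory.volume (a k) (a (k + 1)) :=
    fun k hk => (hcont.mono (hsub k hk)).intervalIntegrable
  have hsplit : ∫ t in (a 0)..(a n), g t = ∑ k ∈ Finset.range n, ∫ t in a k..a (k+1), g t :=
    (intervalIntegral.sum_integral_adjacent_intervals hintk).symm
  have ha0 : a 0 = 0 := by simp [ha]
  have han : a n = 1 := by simp only [ha]; exact div_self hnR.ne'
  rw [ha0, han] at hsplit
  rw [hsplit, ← Finset.sum_sub_distrib]
  refine le_trans (norm_sum_le _ _) ?_
  have hterm : ∀ k ∈ Finset.range n,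
      norm ((∫ t in a k..a (k+1), g t) - ((n : ℂ))⁻¹ * g (k / n)) ≤ L / n / n := by
    intro k hk
    rw [Finset.mem_range] at hk
    have hlen : a (k+1) - a k = 1 / n := by
      simp only [ha]; push_cast; ring
    have hconst : ((n : ℂ))⁻¹ * g (k / n) = ∫ _ in a k..a (k+1), g (a k) := by
      rw [intervalIntegral.integral_const, hlen]
      rw [Complex.real_smul]
      push_cast
      ring
    rw [hconst, ← intervalIntegral.integral_sub (hintk k hk) intervalIntegrable_const]
    have hbd : ∀ x ∈ Set.uIoc (a k) (a (k+1)), ‖g x - g (a k)‖ ≤ L / n := by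
      intro x hx
      have hxm : x ∈ Set.uIcc (a k) (a (k+1)) := Set.uIoc_subset_uIcc hx
      have hx01 := hsub k hk hxm
      have hak01 := hmem k hk.le
      have h1 := hlip x hx01 (a k) hak01
      refine h1.trans ?_
      have hxd : |x - a k| ≤ 1 / n := by
        rw [Set.uIcc_of_le ((div_le_div_iff_of_pos_right hnR).2 (by push_cast; linarith))] at hxm
        have hak : a k = (k:ℝ) / n := rfl
        have hak1 : a (k+1) = ((k+1:ℕ):ℝ) / n := rfl
        rw [abs_le]
        constructor
        · have h2 : (0:ℝ) < 1 / n := by positivity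
          linarith [hxm.1]
        · have h3 := hxm.2
          rw [← hak1] at h3
          linarith
      calc L * |x - a k| ≤ L * (1 / n) := by gcongr
        _ = L / n := by ring
    have := intervalIntegral.norm_integral_le_of_norm_le_const hbd
    refine this.trans ?_
    rw [hlen]
    rw [abs_of_nonneg (by positivity)]
    ring_nf
    exact le_refl _
  refine le_trans (Finset.sum_le_sum hterm) ?_
  rw [Finset.sum_const, Finset.card_range, nsmul_eq_mul]
  have he : (n:ℝ) * (L / n / n) = L / n := by field_simp
  exact le_of_eq he

def seg17 (p q w : ℂ) : ℂ := ∫ t in (0:ℝ)..1, (q - p) / (p + (t : ℂ) * (q - p) - w)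

lemma seg17_eq (p q w c : ℂ) (hc : c ≠ 0)
    (h : ∀ t ∈ Set.Icc (0:ℝ) 1, c * (p + (t : ℂ) * (q - p) - w) ∈ Complex.slitPlane) :
    seg17 p q w = Complex.log (c * (q - w)) - Complex.log (c * (p - w)) := by
  set ψ : ℝ → ℂ := fun t => c * (p + (t : ℂ) * (q - p) - w) with hψ
  have hψne : ∀ t ∈ Set.Icc (0:ℝ) 1, ψ t ≠ 0 := by
    intro t ht hz
    have h5 := h t ht
    rw [show c * (p + (t : ℂ) * (q - p) - w) = ψ t from rfl, hz] at h5
    exact Complex.zero_notMem_slitPlane h5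
  have hXne : ∀ t ∈ Set.Icc (0:ℝ) 1, p + (t : ℂ) * (q - p) - w ≠ 0 := by
    intro t ht hz
    exact hψne t ht (by simp [hψ, hz])
  have hderiv : ∀ t ∈ Set.uIcc (0:ℝ) 1,
      HasDerivAt (fun s : ℝ => Complex.log (ψ s))
        ((q - p) / (p + (t : ℂ) * (q - p) - w)) t := by
    intro t ht
    rw [Set.uIcc_of_le (by norm_num : (0:ℝ) ≤ 1)] at ht
    have h1 : HasDerivAt (fun s : ℝ => ((s : ℂ))) 1 t := by
      simpa using (hasDerivAt_id t).ofReal_comp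
    have h2 : HasDerivAt ψ (c * (q - p)) t := by
      have h3 := (h1.const_mul (c * (q - p))).add_const (c * (p - w))
      have e : ψ = fun s : ℝ => c * (q - p) * ((s : ℂ)) + c * (p - w) := by
        funext s; simp only [hψ]; ring
      rw [e]
      simpa using h3
    have h4 : HasDerivAt (Complex.log ∘ ψ) ((ψ t)⁻¹ * (c * (q - p))) t :=
      HasDerivAt.comp_of_eq t (Complex.hasDerivAt_log (h t ht)) h2 rfl
    have e2 : (ψ t)⁻¹ * (c * (q - p)) = (q - p) / (p + (t : ℂ) * (q - p) - w) := by
      rw [hψ]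
      field_simp [hXne t ht]
    rw [e2] at h4
    exact h4
  have hint : IntervalIntegrable (fun t : ℝ => (q - p) / (p + (t : ℂ) * (q - p) - w))
      MeasureTheory.volume 0 1 := by
    apply ContinuousOn.intervalIntegrable
    rw [Set.uIcc_of_le (by norm_num : (0:ℝ) ≤ 1)]
    apply ContinuousOn.div continuousOn_const
    · exact (Continuous.continuousOn (by continuity))
    · exact hXne
  have := intervalIntegral.integral_eq_sub_of_hasDerivAt hderiv hint
  have e1 : ψ 1 = c * (q - w) := by simp only [hψ]; push_cast; ring
  have e0 : ψ 0 = c * (p - w) := by simp only [hψ]; push_cast; ring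
  rw [seg17, this, e1, e0]

def cpx (x y : ℝ) : ℂ := x + y * Complex.I

@[simp] lemma cpx_re (x y : ℝ) : (cpx x y).re = x := by simp [cpx]
@[simp] lemma cpx_im (x y : ℝ) : (cpx x y).im = y := by simp [cpx]

lemma cpx_edge (x1 y1 x2 y2 t : ℝ) (w : ℂ) :
    cpx x1 y1 + (t : ℂ) * (cpx x2 y2 - cpx x1 y1) - w
      = cpx (x1 + t * (x2 - x1) - w.re) (y1 + t * (y2 - y1) - w.im) := by
  apply Complex.ext <;> simp [cpx] <;> ring

lemma cpx_sub (x y : ℝ) (w : ℂ) : cpx x y - w = cpx (x - w.re) (y - w.im) := by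
  apply Complex.ext <;> simp [cpx]

lemma neg_cpx (x y : ℝ) : -cpx x y = cpx (-x) (-y) := by
  apply Complex.ext <;> simp [cpx]

lemma cpx_mem_slitPlane {x y : ℝ} (h : 0 < x ∨ y ≠ 0) : cpx x y ∈ Complex.slitPlane := by
  rw [Complex.mem_slitPlane_iff]; simpa using h

lemma log_neg_of_im_neg {u : ℂ} (h : u.im < 0) :
    Complex.log (-u) = Complex.log u + Real.pi * Complex.I := by
  apply Complex.ext
  · simp [Complex.log_re]
  · simp [Complex.log_im, Complex.arg_neg_eq_arg_add_pi_of_im_neg h]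

lemma log_neg_of_im_pos {u : ℂ} (h : 0 < u.im) :
    Complex.log (-u) = Complex.log u - Real.pi * Complex.I := by
  apply Complex.ext
  · simp [Complex.log_re]
  · simp [Complex.log_im, Complex.arg_neg_eq_arg_sub_pi_of_im_pos h]

def rectI (A B δ : ℝ) (w : ℂ) : ℂ :=
  seg17 (cpx A (-δ)) (cpx B (-δ)) w + seg17 (cpx B (-δ)) (cpx B δ) w
    + seg17 (cpx B δ) (cpx A δ) w + seg17 (cpx A δ) (cpx A (-δ)) w

lemma rect_inside (A B δ : ℝ) (w : ℂ) (hA : A < w.re) (hB : w.re < B)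
    (h1 : -δ < w.im) (h2 : w.im < δ) :
    rectI A B δ w = 2 * Real.pi * Complex.I := by
  have e1 : seg17 (cpx A (-δ)) (cpx B (-δ)) w
      = Complex.log (cpx B (-δ) - w) - Complex.log (cpx A (-δ) - w) := by
    have := seg17_eq (cpx A (-δ)) (cpx B (-δ)) w 1 one_ne_zero ?_
    · simpa using this
    · intro t ht
      rw [one_mul, cpx_edge]
      exact cpx_mem_slitPlane (Or.inr (by simp; nlinarith))
  have e2 : seg17 (cpx B (-δ)) (cpx B δ) w
      = Complex.log (cpx B δ - w) - Complex.log (cpx B (-δ) - w) := by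
    have := seg17_eq (cpx B (-δ)) (cpx B δ) w 1 one_ne_zero ?_
    · simpa using this
    · intro t ht
      rw [one_mul, cpx_edge]
      exact cpx_mem_slitPlane (Or.inl (by simp; nlinarith))
  have e3 : seg17 (cpx B δ) (cpx A δ) w
      = Complex.log (cpx A δ - w) - Complex.log (cpx B δ - w) := by
    have := seg17_eq (cpx B δ) (cpx A δ) w 1 one_ne_zero ?_
    · simpa using this
    · intro t ht
      rw [one_mul, cpx_edge]
      exact cpx_mem_slitPlane (Or.inr (by simp; nlinarith))
  have e4 : seg17 (cpx A δ) (cpx A (-δ)) w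
      = Complex.log (-(cpx A (-δ) - w)) - Complex.log (-(cpx A δ - w)) := by
    have := seg17_eq (cpx A δ) (cpx A (-δ)) w (-1) (by norm_num) ?_
    · rw [this]; ring_nf
    · intro t ht
      rw [cpx_edge, neg_one_mul, neg_cpx]
      exact cpx_mem_slitPlane (Or.inl (by simp; nlinarith [ht.1, ht.2]))
  have hu : (cpx A (-δ) - w).im < 0 := by rw [cpx_sub]; simp; linarith
  have hv : 0 < (cpx A δ - w).im := by rw [cpx_sub]; simp; linarith
  rw [rectI, e1, e2, e3, e4, log_neg_of_im_neg hu, log_neg_of_im_pos hv]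
  push_cast
  ring

lemma rect_outside (A B δ : ℝ) (hAB : A ≤ B) (hδ : 0 ≤ δ) (w : ℂ)
    (h : δ < w.im ∨ w.im < -δ ∨ w.re < A ∨ B < w.re) :
    rectI A B δ w = 0 := by
  have key : ∃ c : ℂ, c ≠ 0 ∧ ∀ (x1 y1 x2 y2 : ℝ),
      ((y1 = -δ ∨ y1 = δ) ∧ (y2 = -δ ∨ y2 = δ) ∧ (x1 = A ∨ x1 = B) ∧ (x2 = A ∨ x2 = B)) →
      ∀ t ∈ Set.Icc (0:ℝ) 1,
        c * (cpx x1 y1 + (t : ℂ) * (cpx x2 y2 - cpx x1 y1) - w) ∈ Complex.slitPlane := by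
    rcases h with h | h | h | h
    · refine ⟨1, one_ne_zero, fun x1 y1 x2 y2 hc t ht => ?_⟩
      rw [one_mul, cpx_edge]
      obtain ⟨hy1, hy2, -, -⟩ := hc
      refine cpx_mem_slitPlane (Or.inr (ne_of_lt ?_))
      rcases hy1 with rfl | rfl <;> rcases hy2 with rfl | rfl <;> nlinarith [ht.1, ht.2]
    · refine ⟨1, one_ne_zero, fun x1 y1 x2 y2 hc t ht => ?_⟩
      rw [one_mul, cpx_edge]
      obtain ⟨hy1, hy2, -, -⟩ := hc
      refine cpx_mem_slitPlane (Or.inr (ne_of_gt ?_))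
      rcases hy1 with rfl | rfl <;> rcases hy2 with rfl | rfl <;> nlinarith [ht.1, ht.2]
    · refine ⟨1, one_ne_zero, fun x1 y1 x2 y2 hc t ht => ?_⟩
      rw [one_mul, cpx_edge]
      obtain ⟨-, -, hx1, hx2⟩ := hc
      refine cpx_mem_slitPlane (Or.inl ?_)
      rcases hx1 with rfl | rfl <;> rcases hx2 with rfl | rfl <;> nlinarith [ht.1, ht.2]
    · refine ⟨-1, by norm_num, fun x1 y1 x2 y2 hc t ht => ?_⟩
      rw [cpx_edge, neg_one_mul, neg_cpx]
      obtain ⟨-, -, hx1, hx2⟩ := hc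
      refine cpx_mem_slitPlane (Or.inl ?_)
      rcases hx1 with rfl | rfl <;> rcases hx2 with rfl | rfl <;> nlinarith [ht.1, ht.2]
  obtain ⟨c, hc, hmem⟩ := key
  rw [rectI,
    seg17_eq _ _ w c hc (hmem A (-δ) B (-δ) ⟨Or.inl rfl, Or.inl rfl, Or.inl rfl, Or.inr rfl⟩),
    seg17_eq _ _ w c hc (hmem B (-δ) B δ ⟨Or.inl rfl, Or.inr rfl, Or.inr rfl, Or.inr rfl⟩),
    seg17_eq _ _ w c hc (hmem B δ A δ ⟨Or.inr rfl, Or.inr rfl, Or.inr rfl, Or.inl rfl⟩),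
    seg17_eq _ _ w c hc (hmem A δ A (-δ) ⟨Or.inr rfl, Or.inl rfl, Or.inl rfl, Or.inl rfl⟩)]
  ring

lemma seg17_approx (p q : ℂ) (X : Set ℂ) (δ : ℝ) (hδ : 0 < δ)
    (hdist : ∀ w ∈ X, ∀ t ∈ Set.Icc (0:ℝ) 1,
      δ ≤ norm (p + (t : ℂ) * (q - p) - w)) (n : ℕ) (hn : 0 < n) :
    ∃ S : ℂ → ℂ, RatOn X S ∧ ∀ w ∈ X,
      norm (seg17 p q w - S w) ≤ (norm (q - p))^2 / δ^2 / n := by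
  set S : ℂ → ℂ := fun w => ∑ k ∈ Finset.range n,
    (((n : ℂ))⁻¹ * (q - p)) / ((p + ((((k:ℝ) / (n:ℝ) : ℝ)) : ℂ) * (q - p)) - w) with hS
  have hne : ∀ k ∈ Finset.range n, ∀ w ∈ X,
      (p + ((((k:ℝ) / (n:ℝ) : ℝ)) : ℂ) * (q - p)) - w ≠ 0 := by
    intro k hk w hw
    rw [Finset.mem_range] at hk
    have ht : ((k:ℝ) / (n:ℝ)) ∈ Set.Icc (0:ℝ) 1 := by
      constructor
      · positivity
      · rw [div_le_one (by exact_mod_cast hn)]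
        exact_mod_cast hk.le
    have h1 := hdist w hw _ ht
    intro h0
    rw [show p + ((((k:ℝ) / (n:ℝ) : ℝ)) : ℂ) * (q - p) - w
      = p + ((((k:ℝ) / (n:ℝ) : ℝ)) : ℂ) * (q - p) - w from rfl, h0] at h1
    simp at h1
    linarith
  refine ⟨S, ratOn_sum _ _ (fun k hk => ratOn_inv_sub _ (hne k hk)), fun w hw => ?_⟩
  -- identify S w with the Riemann sum of g
  set g : ℝ → ℂ := fun t => (q - p) / (p + (t : ℂ) * (q - p) - w) with hg
  have hSw : S w = ∑ k ∈ Finset.range n, ((n : ℂ))⁻¹ * g ((k:ℝ) / (n:ℝ)) := by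
    apply Finset.sum_congr rfl
    intro k hk
    rw [hg]
    simp only []
    rw [mul_div_assoc]
  have hXne : ∀ t ∈ Set.Icc (0:ℝ) 1, p + (t : ℂ) * (q - p) - w ≠ 0 := by
    intro t ht h0
    have h1 := hdist w hw t ht
    rw [h0] at h1
    simp at h1
    linarith
  have hlip : ∀ s ∈ Set.Icc (0:ℝ) 1, ∀ t ∈ Set.Icc (0:ℝ) 1,
      norm (g s - g t) ≤ (norm (q - p))^2 / δ^2 * |s - t| := by
    intro s hs t ht
    have hns := hXne s hs
    have hnt := hXne t ht
    have e : g s - g t = ((q - p) * (q - p) * ((t : ℂ) - (s : ℂ)))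
        / ((p + (s : ℂ) * (q - p) - w) * (p + (t : ℂ) * (q - p) - w)) := by
      rw [hg]
      simp only []
      rw [div_sub_div _ _ hns hnt]
      ring
    rw [e, norm_div, norm_mul, norm_mul, norm_mul]
    have habs : norm ((t : ℂ) - (s : ℂ)) = |s - t| := by
      rw [← Complex.ofReal_sub, Complex.norm_real, Real.norm_eq_abs, abs_sub_comm]
    rw [habs]
    have hd1 := hdist w hw s hs
    have hd2 := hdist w hw t ht
    have hpos1 : (0:ℝ) < norm (p + (s : ℂ) * (q - p) - w) := lt_of_lt_of_le hδ hd1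
    have hpos2 : (0:ℝ) < norm (p + (t : ℂ) * (q - p) - w) := lt_of_lt_of_le hδ hd2
    rw [div_le_iff₀ (by positivity)]
    calc norm (q - p) * norm (q - p) * |s - t|
        = (norm (q - p))^2 / δ^2 * |s - t| * (δ * δ) := by
          field_simp
      _ ≤ (norm (q - p))^2 / δ^2 * |s - t| *
            (norm (p + (s : ℂ) * (q - p) - w) * norm (p + (t : ℂ) * (q - p) - w)) := by
          gcongr
  have hcont : ContinuousOn g (Set.Icc 0 1) := by
    apply ContinuousOn.div continuousOn_const
    · exact Continuous.continuousOn ((continuous_const.add (Complex.continuous_ofReal.mul continuous_const)).sub continuous_const)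
    · exact hXne
  have hb := riemann_bound g ((norm (q - p))^2 / δ^2) hlip hcont n hn
  rw [hSw]
  exact hb

lemma chi_exists (X Jset : Set ℂ) (a b : ℝ) (hab : a ≤ b)
    (hJ : Jset = (fun t : ℝ => (t : ℂ)) '' Set.Icc a b) (hJX : Jset ⊆ X) (d : ℝ) (hd : 0 < d)
    (hsep : ∀ w ∈ X \ Jset, ∀ z ∈ Jset, d ≤ norm (w - z)) :
    ∃ χ : ℂ → ℂ, (∀ w ∈ Jset, χ w = 1) ∧ (∀ w ∈ X \ Jset, χ w = 0) ∧
      ∀ ε > 0, ∃ S, RatOn X S ∧ ∀ w ∈ X, norm (χ w - S w) ≤ ε := by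
  set δ : ℝ := d / 4 with hδdef
  have hδ : 0 < δ := by positivity
  set A : ℝ := a - δ with hA
  set B : ℝ := b + δ with hB
  have hAB : A ≤ B := by simp only [hA, hB]; linarith
  have h2pi : (2 * (Real.pi : ℂ) * Complex.I) ≠ 0 := by
    simp [Real.pi_ne_zero, Complex.I_ne_zero, Complex.ofReal_ne_zero]
  set χ : ℂ → ℂ := fun w => (2 * (Real.pi : ℂ) * Complex.I)⁻¹ * rectI A B δ w with hχ
  -- the "outside" geometric fact
  have houtside : ∀ w ∈ X \ Jset, δ < w.im ∨ w.im < -δ ∨ w.re < A ∨ B < w.re := by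
    intro w hw
    by_contra hcon
    push_neg at hcon
    obtain ⟨h1, h2, h3, h4⟩ := hcon
    -- find clamp point
    obtain ⟨c, hc, hcd⟩ : ∃ c ∈ Set.Icc a b, |w.re - c| ≤ δ := by
      rcases le_total w.re a with h | h
      · exact ⟨a, ⟨le_refl a, hab⟩, by rw [abs_le]; constructor <;> simp only [hA] at h3 <;> linarith⟩
      rcases le_total b w.re with h' | h'
      · exact ⟨b, ⟨hab, le_refl b⟩, by rw [abs_le]; constructor <;> simp only [hB] at h4 <;> linarith⟩
      · exact ⟨w.re, ⟨h, h'⟩, by simp [hδ.le]⟩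
    have hcJ : (c : ℂ) ∈ Jset := by rw [hJ]; exact ⟨c, hc, rfl⟩
    have hd1 := hsep w hw (c : ℂ) hcJ
    have hle : norm (w - (c : ℂ)) ≤ |w.re - c| + |w.im| := by
      have e : w - (c : ℂ) = cpx (w.re - c) (w.im) := by
        rw [show w = cpx w.re w.im from (by apply Complex.ext <;> simp [cpx_re, cpx_im])]
        rw [cpx_sub]
        simp [cpx_re, cpx_im]
      rw [e]
      refine (Complex.norm_le_abs_re_add_abs_im _).trans ?_
      rw [cpx_re, cpx_im]
    have him : |w.im| ≤ δ := abs_le.2 ⟨by linarith, by linarith⟩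
    have : d ≤ 2 * δ := by linarith [hd1, hle, hcd, him]
    rw [hδdef] at this
    linarith
  refine ⟨χ, ?_, ?_, ?_⟩
  · -- value 1 on Jset
    intro w hw
    rw [hJ] at hw
    obtain ⟨t, ht, rfl⟩ := hw
    have hre : ((t:ℂ)).re = t := by simp
    have him : ((t:ℂ)).im = 0 := by simp
    rw [hχ]
    simp only []
    rw [rect_inside A B δ _ (by rw [hre]; simp only [hA]; linarith [ht.1])
      (by rw [hre]; simp only [hB]; linarith [ht.2]) (by rw [him]; linarith) (by rw [him]; linarith)]
    field_simp
  · intro w hw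
    rw [hχ]
    simp only []
    rw [rect_outside A B δ hAB hδ.le w (houtside w hw)]
    simp
  · -- approximation
    intro ε hε
    -- uniform distance bound for contour points
    have hgen : ∀ x1 y1 x2 y2 : ℝ, x1 ∈ Set.Icc A B → x2 ∈ Set.Icc A B →
        |y1| ≤ δ → |y2| ≤ δ →
        ((y1 = y2 ∧ |y1| = δ) ∨ (x1 = x2 ∧ (x1 = A ∨ x1 = B))) →
        ∀ w ∈ X, ∀ t ∈ Set.Icc (0:ℝ) 1,
          δ ≤ norm (cpx x1 y1 + (t : ℂ) * (cpx x2 y2 - cpx x1 y1) - w) := by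
      intro x1 y1 x2 y2 hx1 hx2 hy1 hy2 hcase w hw t ht
      rw [cpx_edge]
      set xt : ℝ := x1 + t * (x2 - x1) with hxt
      set yt : ℝ := y1 + t * (y2 - y1) with hyt
      have hxtI : xt ∈ Set.Icc A B := by
        constructor
        · simp only [hxt]; nlinarith [hx1.1, hx2.1, ht.1, ht.2]
        · simp only [hxt]; nlinarith [hx1.2, hx2.2, ht.1, ht.2]
      have hytI : |yt| ≤ δ := by
        rw [abs_le] at hy1 hy2 ⊢
        constructor
        · simp only [hyt]; nlinarith [hy1.1, hy2.1, ht.1, ht.2]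
        · simp only [hyt]; nlinarith [hy1.2, hy2.2, ht.1, ht.2]
      by_cases hwJ : w ∈ Jset
      · -- w on the segment
        rw [hJ] at hwJ
        obtain ⟨s, hs, rfl⟩ := hwJ
        have hre : ((s:ℂ)).re = s := by simp
        have him : ((s:ℂ)).im = 0 := by simp
        rcases hcase with ⟨hee, habs⟩ | ⟨hxx, hAB'⟩
        · -- horizontal edge: |imaginary part| = δ
          have : (cpx (xt - (s:ℂ).re) (yt - (s:ℂ).im)).im = yt - (s:ℂ).im := cpx_im _ _
          refine le_trans ?_ (Complex.abs_im_le_norm _)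
          rw [this, him, sub_zero]
          have : yt = y1 := by simp only [hyt, ← hee]; ring
          rw [this, ← habs]
        · -- vertical edge
          refine le_trans ?_ (Complex.abs_re_le_norm _)
          rw [cpx_re, hre]
          have hxteq : xt = x1 := by simp only [hxt, ← hxx]; ring
          rcases hAB' with h5 | h5
          · rw [hxteq, h5, abs_sub_comm, abs_of_nonneg (by simp only [hA]; linarith [hs.1])]
            simp only [hA]; linarith [hs.1]
          · rw [hxteq, h5, abs_of_nonneg (by simp only [hB]; linarith [hs.2])]
            simp only [hB]; linarith [hs.2]
      · -- w off the segment
        have hwX : w ∈ X \ Jset := ⟨hw, hwJ⟩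
        obtain ⟨c, hc, hcd⟩ : ∃ c ∈ Set.Icc a b, |xt - c| ≤ δ := by
          rcases le_total xt a with h | h
          · exact ⟨a, ⟨le_refl a, hab⟩, by
              rw [abs_le]; constructor <;> [skip; linarith]
              have := hxtI.1; simp only [hA] at this; linarith⟩
          rcases le_total b xt with h' | h'
          · exact ⟨b, ⟨hab, le_refl b⟩, by
              rw [abs_le]; constructor <;> [linarith; skip]
              have := hxtI.2; simp only [hB] at this; linarith⟩
          · exact ⟨xt, ⟨h, h'⟩, by simp [hδ.le]⟩
        have hcJ : (c : ℂ) ∈ Jset := by rw [hJ]; exact ⟨c, hc, rfl⟩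
        have hd1 := hsep w hwX (c : ℂ) hcJ
        have hptc : norm (cpx xt yt - (c : ℂ)) ≤ 2 * δ := by
          rw [cpx_sub]
          refine (Complex.norm_le_abs_re_add_abs_im _).trans ?_
          rw [cpx_re, cpx_im]
          have h1 : |xt - (c:ℂ).re| ≤ δ := by simpa using hcd
          have h2 : |yt - (c:ℂ).im| ≤ δ := by simpa using hytI
          linarith
        have htri : norm (w - (c : ℂ)) ≤ norm (w - cpx xt yt)
            + norm (cpx xt yt - (c : ℂ)) := by
          have := norm_add_le (w - cpx xt yt) (cpx xt yt - (c : ℂ))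
          simpa using this
        have e : cpx (xt - w.re) (yt - w.im) = cpx xt yt - w := (cpx_sub xt yt w).symm
        rw [e, norm_sub_rev]
        have : d - 2 * δ ≤ norm (w - cpx xt yt) := by linarith
        refine le_trans ?_ this
        rw [hδdef]
        linarith
    have habsδ : |(-δ)| ≤ δ := by rw [abs_neg, abs_of_nonneg hδ.le]
    have habsδ' : |δ| ≤ δ := by rw [abs_of_nonneg hδ.le]
    have hmA : A ∈ Set.Icc A B := ⟨le_refl A, hAB⟩
    have hmB : B ∈ Set.Icc A B := ⟨hAB, le_refl B⟩
    have hd1 := hgen A (-δ) B (-δ) hmA hmB habsδ habsδ (Or.inl ⟨rfl, by rw [abs_neg, abs_of_nonneg hδ.le]⟩)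
    have hd2 := hgen B (-δ) B δ hmB hmB habsδ habsδ' (Or.inr ⟨rfl, Or.inr rfl⟩)
    have hd3 := hgen B δ A δ hmB hmA habsδ' habsδ' (Or.inl ⟨rfl, by rw [abs_of_nonneg hδ.le]⟩)
    have hd4 := hgen A δ A (-δ) hmA hmA habsδ' habsδ (Or.inr ⟨rfl, Or.inl rfl⟩)
    set C1 : ℝ := (norm (cpx B (-δ) - cpx A (-δ)))^2 / δ^2 with hC1
    set C2 : ℝ := (norm (cpx B δ - cpx B (-δ)))^2 / δ^2 with hC2
    set C3 : ℝ := (norm (cpx A δ - cpx B δ))^2 / δ^2 with hC3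
    set C4 : ℝ := (norm (cpx A (-δ) - cpx A δ))^2 / δ^2 with hC4
    set C : ℝ := C1 + C2 + C3 + C4 with hC
    set n : ℕ := ⌈C / ε⌉₊ + 1 with hn
    have hnpos : 0 < n := Nat.succ_pos _
    have hnR : (0:ℝ) < n := by exact_mod_cast hnpos
    obtain ⟨S1, hS1r, hS1⟩ := seg17_approx (cpx A (-δ)) (cpx B (-δ)) X δ hδ hd1 n hnpos
    obtain ⟨S2, hS2r, hS2⟩ := seg17_approx (cpx B (-δ)) (cpx B δ) X δ hδ hd2 n hnpos
    obtain ⟨S3, hS3r, hS3⟩ := seg17_approx (cpx B δ) (cpx A δ) X δ hδ hd3 n hnpos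
    obtain ⟨S4, hS4r, hS4⟩ := seg17_approx (cpx A δ) (cpx A (-δ)) X δ hδ hd4 n hnpos
    refine ⟨fun w => (2 * (Real.pi : ℂ) * Complex.I)⁻¹ * (S1 w + S2 w + S3 w + S4 w),
      RatOn.mul (ratOn_const X _) (((hS1r.add hS2r).add hS3r).add hS4r), fun w hw => ?_⟩
    have e : χ w - (2 * (Real.pi : ℂ) * Complex.I)⁻¹ * (S1 w + S2 w + S3 w + S4 w)
        = (2 * (Real.pi : ℂ) * Complex.I)⁻¹ *
          (((seg17 (cpx A (-δ)) (cpx B (-δ)) w - S1 w) + (seg17 (cpx B (-δ)) (cpx B δ) w - S2 w))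
            + ((seg17 (cpx B δ) (cpx A δ) w - S3 w) + (seg17 (cpx A δ) (cpx A (-δ)) w - S4 w))) := by
      rw [hχ]
      simp only [rectI]
      ring
    rw [e, norm_mul]
    have habs2pi : norm ((2 * (Real.pi : ℂ) * Complex.I)⁻¹) ≤ 1 := by
      rw [norm_inv]
      rw [inv_le_one_iff₀]
      right
      rw [norm_mul, norm_mul, Complex.norm_I, Complex.norm_real, Real.norm_eq_abs, Complex.norm_two,
        abs_of_nonneg Real.pi_pos.le]
      nlinarith [Real.pi_gt_three]
    have hsum : norm (((seg17 (cpx A (-δ)) (cpx B (-δ)) w - S1 w)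
          + (seg17 (cpx B (-δ)) (cpx B δ) w - S2 w))
        + ((seg17 (cpx B δ) (cpx A δ) w - S3 w) + (seg17 (cpx A δ) (cpx A (-δ)) w - S4 w)))
        ≤ C / n := by
      refine le_trans (norm_add_le _ _) ?_
      have t1 := le_trans (norm_add_le _ _)
        (add_le_add (hS1 w hw) (hS2 w hw))
      have t2 := le_trans (norm_add_le _ _)
        (add_le_add (hS3 w hw) (hS4 w hw))
      have : C / n = (C1 / n + C2 / n) + (C3 / n + C4 / n) := by
        rw [hC]; ring
      rw [this]
      exact add_le_add t1 t2
    have hCn : C / n ≤ ε := by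
      rw [div_le_iff₀ hnR]
      have h6 : C / ε ≤ (n : ℝ) := by
        refine le_trans (Nat.le_ceil _) ?_
        rw [hn]
        push_cast
        linarith
      calc C = C / ε * ε := by field_simp
        _ ≤ (n:ℝ) * ε := by gcongr
        _ = ε * n := by ring
    calc norm ((2 * (Real.pi:ℂ) * Complex.I)⁻¹) * norm _ ≤ 1 * (C / n) := by
          exact mul_le_mul habs2pi hsum (norm_nonneg _) one_pos.le
      _ = C / n := one_mul _
      _ ≤ ε := hCn

-- bounds for Rmem functions on compact sets
lemma Rmem.bound {K : Set ℂ} {f : ℂ → ℂ} (hK : IsCompact K) (hf : Rmem K f) :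
    ∃ M : ℝ, 0 ≤ M ∧ ∀ z ∈ K, norm (f z) ≤ M := by
  obtain ⟨M, hM⟩ := hK.exists_bound_of_continuousOn hf.1
  exact ⟨max M 0, le_max_right _ _, fun z hz => le_trans (hM z hz) (le_max_left _ _)⟩

lemma Rmem.mul {K : Set ℂ} {f g : ℂ → ℂ} (hK : IsCompact K)
    (hf : Rmem K f) (hg : Rmem K g) : Rmem K (fun z => f z * g z) := by
  refine ⟨hf.1.mul hg.1, fun ε hε => ?_⟩
  obtain ⟨Mf, hMf0, hMf⟩ := hf.bound hK
  obtain ⟨Mg, hMg0, hMg⟩ := hg.bound hK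
  set η : ℝ := min 1 (ε / (Mf + Mg + 1)) with hη
  have hηpos : 0 < η := lt_min one_pos (div_pos hε (by linarith))
  obtain ⟨r, hr, hrf⟩ := hf.2 η hηpos
  obtain ⟨s, hs, hsg⟩ := hg.2 η hηpos
  refine ⟨fun z => r z * s z, hr.mul hs, fun z hz => ?_⟩
  have hsb : norm (s z) ≤ Mg + 1 := by
    have h1 := norm_add_le (s z - g z) (g z)
    simp only [sub_add_cancel] at h1
    have h2 : norm (s z - g z) ≤ η := by
      rw [norm_sub_rev]; exact hsg z hz
    have h3 : η ≤ 1 := min_le_left _ _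
    linarith [hMg z hz]
  have key : norm (f z * g z - r z * s z)
      ≤ Mf * η + (Mg + 1) * η := by
    have e : f z * g z - r z * s z = f z * (g z - s z) + s z * (f z - r z) := by ring
    rw [e]
    refine (norm_add_le _ _).trans ?_
    rw [norm_mul, norm_mul]
    gcongr
    · exact hMf z hz
    · exact hsg z hz
    · exact hrf z hz
  refine key.trans ?_
  have h4 : η ≤ ε / (Mf + Mg + 1) := min_le_right _ _
  have h5 : (Mf + Mg + 1) * η ≤ (Mf + Mg + 1) * (ε / (Mf + Mg + 1)) := by
    apply mul_le_mul_of_nonneg_left h4 (by linarith)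
  have h6 : (Mf + Mg + 1) * (ε / (Mf + Mg + 1)) = ε := by field_simp
  nlinarith [hηpos.le]

lemma rmem_prod {K : Set ℂ} {ι : Type*} (hK : IsCompact K) (s : Finset ι) (f : ι → ℂ → ℂ)
    (h : ∀ i ∈ s, Rmem K (f i)) : Rmem K (fun z => ∏ i ∈ s, f i z) := by
  classical
  induction s using Finset.induction with
  | empty => simpa using rmem_const K 1
  | insert _ _ hx ih =>
    rename_i i t
    simp only [Finset.prod_insert hx]
    exact Rmem.mul hK (h i (Finset.mem_insert_self i t))
      (ih fun j hj => h j (Finset.mem_insert_of_mem hj))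

lemma Rmem.mono {K X : Set ℂ} {f : ℂ → ℂ} (hKX : K ⊆ X) (hf : Rmem X f) : Rmem K f := by
  refine ⟨hf.1.mono hKX, fun ε hε => ?_⟩
  obtain ⟨g, ⟨p, q, hq, hg⟩, hfg⟩ := hf.2 ε hε
  exact ⟨g, ⟨p, q, fun z hz => hq z (hKX hz), fun z hz => hg z (hKX hz)⟩,
    fun z hz => hfg z (hKX hz)⟩

lemma PointOfCont.mono {K X : Set ℂ} {x : ℂ} (hKX : K ⊆ X) (h : PointOfCont X x) :
    PointOfCont K x := by
  intro y hy hyx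
  obtain ⟨f, hf, ⟨U, hU, hyU, hvan⟩, hfx⟩ := h y (hKX hy) hyx
  exact ⟨f, hf.mono hKX, ⟨U, hU, hyU, fun z hz => hvan z ⟨hKX hz.1, hz.2⟩⟩, hfx⟩

lemma regular_of_poc {K : Set ℂ} (hK : IsCompact K) (h : ∀ y ∈ K, PointOfCont K y) :
    RegularR K := by
  intro F hFK hFcl y hy
  by_cases hFe : F = ∅
  · exact ⟨fun _ => 1, rmem_const K 1, rfl, by simp [hFe]⟩
  have hFc : IsCompact F := hK.of_isClosed_subset hFcl hFK
  -- for each z in F, a function vanishing near z, nonzero at y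
  have hy1 := hy.1
  have key : ∀ z : F, ∃ fU : (ℂ → ℂ) × Set ℂ, Rmem K fU.1 ∧ IsOpen fU.2 ∧ (z : ℂ) ∈ fU.2 ∧
      (∀ w ∈ K ∩ fU.2, fU.1 w = 0) ∧ fU.1 y ≠ 0 := by
    intro z
    have hzK : (z : ℂ) ∈ K := hFK z.2
    have hzy : (z : ℂ) ≠ y := fun e => hy.2 (e ▸ z.2)
    obtain ⟨f, hf, ⟨U, hU, hzU, hvan⟩, hfy⟩ := h y hy1 z hzK hzy
    exact ⟨(f, U), hf, hU, hzU, hvan, hfy⟩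
  choose fU hrm hop hmem hvan hne using key
  have hcov : F ⊆ ⋃ z : F, (fU z).2 := fun w hw =>
    Set.mem_iUnion.2 ⟨⟨w, hw⟩, hmem ⟨w, hw⟩⟩
  obtain ⟨S, hS⟩ := hFc.elim_finite_subcover (fun z : F => (fU z).2) hop hcov
  set g : ℂ → ℂ := fun w => ∏ i ∈ S, (fU i).1 w with hg
  have hgR : Rmem K g := rmem_prod hK S _ (fun i _ => hrm i)
  have hgy : g y ≠ 0 := Finset.prod_ne_zero_iff.2 fun i _ => hne i
  refine ⟨fun w => (g y)⁻¹ * g w, hgR.const_mul _, by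
    field_simp, fun z hz => ?_⟩
  obtain ⟨i, hiS, hiU⟩ : ∃ i ∈ S, z ∈ (fU i).2 := by
    have := hS hz
    simpa using this
  have : (fU i).1 z = 0 := hvan i z ⟨hFK hz, hiU⟩
  have : g z = 0 := Finset.prod_eq_zero hiS this
  simp [this]

/-- Bump lemma: for distinct u, s in [a,b], a continuous function on ℂ vanishing on an
open set around ↑u, equal to 1 at ↑s, uniformly approximable by polynomials on the segment. -/
lemma bump_exists (a b u s : ℝ) (hu : u ∈ Set.Icc a b) (hs : s ∈ Set.Icc a b) (hne : u ≠ s) :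
    ∃ g : ℂ → ℂ, Continuous g ∧
      (∃ U : Set ℂ, IsOpen U ∧ (u : ℂ) ∈ U ∧ ∀ z ∈ U, g z = 0) ∧ g (s : ℂ) = 1 ∧
      (∀ z ∈ (fun t : ℝ => (t : ℂ)) '' Set.Icc a b, norm (g z) ≤ 1) ∧
      ∀ ε > 0, ∃ P : Polynomial ℂ, ∀ z ∈ (fun t : ℝ => (t : ℂ)) '' Set.Icc a b,
        norm (g z - P.eval z) ≤ ε := by
  set δ : ℝ := |s - u| / 2 with hδ
  have hδpos : 0 < δ := by
    have : s - u ≠ 0 := sub_ne_zero.2 (Ne.symm hne)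
    have := abs_pos.2 this
    positivity
  set F : ℝ → ℝ := fun t => min 1 (max 0 (|t - u| / δ - 1)) with hF
  have hFcont : Continuous F := by
    apply Continuous.min continuous_const
    apply Continuous.max continuous_const
    exact ((continuous_abs.comp (continuous_id.sub continuous_const)).div_const δ).sub
      continuous_const
  have hF01 : ∀ t, 0 ≤ F t ∧ F t ≤ 1 := fun t =>
    ⟨le_min zero_le_one (le_max_left _ _), min_le_left _ _⟩
  have hF0 : ∀ t, |t - u| < δ → F t = 0 := by
    intro t ht
    have h1 : |t - u| / δ - 1 ≤ 0 := by
      rw [sub_nonpos, div_le_one hδpos]; exact ht.le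
    simp only [hF]
    rw [max_eq_left h1, min_eq_right zero_le_one]
  have hFs : F s = 1 := by
    have hne0 : (0:ℝ) < |s - u| := by
      have : s - u ≠ 0 := sub_ne_zero.2 (Ne.symm hne)
      exact abs_pos.2 this
    have h1 : |s - u| / δ = 2 := by
      rw [hδ, eq_comm, eq_div_iff (by positivity : |s - u| / 2 ≠ 0)]
      ring
    show min 1 (max 0 (|s - u| / δ - 1)) = 1
    rw [h1]
    norm_num
  refine ⟨fun z => (F z.re : ℂ), ?_, ⟨{z | |z.re - u| < δ}, ?_, ?_, ?_⟩, ?_, ?_, ?_⟩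
  · exact Complex.continuous_ofReal.comp (hFcont.comp Complex.continuous_re)
  · have : IsOpen {w : ℝ | |w - u| < δ} :=
      isOpen_lt (continuous_abs.comp (continuous_id.sub continuous_const)) continuous_const
    exact this.preimage Complex.continuous_re
  · simp [hδpos]
  · intro z hz
    simp only [Set.mem_setOf_eq] at hz
    simp [hF0 _ hz]
  · simp [hFs]
  · rintro z ⟨t, ht, rfl⟩
    simp only [Complex.ofReal_re, Complex.norm_real, Real.norm_eq_abs]
    rw [abs_of_nonneg (hF01 _).1]
    exact (hF01 _).2
  · intro ε hε
    obtain ⟨P, hP⟩ := exists_polynomial_near_of_continuousOn a b F hFcont.continuousOn ε hε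
    refine ⟨P.map Complex.ofRealHom, ?_⟩
    rintro z ⟨t, ht, rfl⟩
    have he : (P.map Complex.ofRealHom).eval (t : ℂ) = ((P.eval t : ℝ) : ℂ) := by
      rw [Polynomial.eval_map]
      exact (Polynomial.eval₂_at_apply Complex.ofRealHom t).trans rfl
    rw [he]
    simp only [Complex.ofReal_re]
    rw [← Complex.ofReal_sub, Complex.norm_real, Real.norm_eq_abs]
    have := hP t ht
    rw [abs_sub_comm] at this
    exact this.le

/-- Given a compact plane set `X` and a nondegenerate closed real interval `J ⊆ X` with
`R(X)` not regular but every point of `X \ J` a point of continuity for `R(X)`: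
(a) `R(K)` is regular for every nonempty compact `K ⊆ X \ J`; (b) `J` is not clopen
in `X`; (c) `X ≠ J`. -/
theorem stmt17 (X J : Set ℂ) (hX : IsCompact X) (hXne : X.Nonempty)
    (a b : ℝ) (hab : a < b) (hJ : J = (fun t : ℝ => (t : ℂ)) '' Set.Icc a b)
    (hJX : J ⊆ X)
    (hnotreg : ¬ RegularR X)
    (hpoc : ∀ x ∈ X \ J, PointOfCont X x) :
    (∀ K : Set ℂ, K.Nonempty → IsCompact K → K ⊆ X \ J → RegularR K) ∧
      ¬ RelClopen X J ∧ X ≠ J := by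

  have hJcomp : IsCompact J := by
    rw [hJ]; exact isCompact_Icc.image Complex.continuous_ofReal
  -- every point of J is a point of continuity for R(J)
  have hpocJ : ∀ x ∈ J, PointOfCont J x := by
    intro x hx y hy hyx
    rw [hJ] at hx hy
    obtain ⟨s, hs, rfl⟩ := hx
    obtain ⟨u, hu, rfl⟩ := hy
    have hus : u ≠ s := fun h => hyx (by rw [h])
    obtain ⟨g, hgc, ⟨U', hU'o, hU'y, hU'v⟩, hgs, hgb, hgapprox⟩ := bump_exists a b u s hu hs hus
    refine ⟨g, ⟨hgc.continuousOn, ?_⟩, ⟨U', hU'o, hU'y, fun z hz => hU'v z hz.2⟩,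
      by rw [hgs]; exact one_ne_zero⟩
    intro ε hε
    obtain ⟨P, hP⟩ := hgapprox ε hε
    rw [← hJ] at hP
    exact ⟨fun z => P.eval z, ⟨P, 1, by simp, by simp⟩, hP⟩
  have hregJ : RegularR J := regular_of_poc hJcomp hpocJ
  have hXneJ : X ≠ J := fun h => hnotreg (by rw [h]; exact hregJ)
  refine ⟨?_, ?_, hXneJ⟩
  · -- part (a)
    intro K _hKne hKcomp hKsub
    apply regular_of_poc hKcomp
    intro y hy
    exact (hpoc y (hKsub hy)).mono (hKsub.trans Set.diff_subset)
  · -- part (b)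
    intro hclop
    obtain ⟨⟨U, hUo, hUeq⟩, ⟨C, hCc, hCeq⟩⟩ := hclop
    by_cases hLe : X \ J = ∅
    · exact hnotreg (by rw [Set.Subset.antisymm (Set.diff_eq_empty.mp hLe) hJX]; exact hregJ)
    have hLne : (X \ J).Nonempty := Set.nonempty_iff_ne_empty.2 hLe
    have hLclosed : IsClosed (X \ J) := by
      have e : X \ J = X ∩ Uᶜ := by rw [hUeq, Set.diff_self_inter, Set.diff_eq]
      rw [e]
      exact hX.isClosed.inter (isClosed_compl_iff.2 hUo)
    have hLcomp : IsCompact (X \ J) := hX.of_isClosed_subset hLclosed Set.diff_subset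
    have hJclosed : IsClosed J := hJcomp.isClosed
    have hJne : J.Nonempty := by
      rw [hJ]; exact ⟨(a : ℂ), a, ⟨le_refl a, hab.le⟩, rfl⟩
    obtain ⟨w0, hw0L, hw0min⟩ := hLcomp.exists_isMinOn hLne
      (Metric.continuous_infDist_pt J).continuousOn
    set d : ℝ := Metric.infDist w0 J with hd
    have hdpos : 0 < d := by
      rw [hd, ← hJclosed.notMem_iff_infDist_pos hJne]
      exact hw0L.2
    have hsep : ∀ w ∈ X \ J, ∀ z ∈ J, d ≤ norm (w - z) := by
      intro w hw z hz
      have h1 : Metric.infDist w J ≤ dist w z := Metric.infDist_le_dist_of_mem hz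
      have h2 : d ≤ Metric.infDist w J := hw0min hw
      rw [Complex.dist_eq] at h1
      linarith
    obtain ⟨χ, hχ1, hχ0, hχapprox⟩ := chi_exists X J a b hab.le hJ hJX d hdpos hsep
    have hχcont : ContinuousOn χ X := by
      intro x hx
      by_cases hxJ : x ∈ J
      · have hxU : x ∈ U := by
          have : x ∈ X ∩ U := by rw [← hUeq]; exact hxJ
          exact this.2
        have hmem : X ∩ U ∈ 𝓝[X] x :=
          Filter.inter_mem self_mem_nhdsWithin (mem_nhdsWithin_of_mem_nhds (hUo.mem_nhds hxU))
        have heq : ∀ᶠ z in 𝓝[X] x, χ z = 1 := by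
          filter_upwards [hmem] with z hz
          exact hχ1 z (by rw [hUeq]; exact hz)
        exact ContinuousWithinAt.congr_of_eventuallyEq continuousWithinAt_const heq (hχ1 x hxJ)
      · have hxC : x ∈ Cᶜ := fun hc => hxJ (by rw [hCeq]; exact ⟨hx, hc⟩)
        have hmem : X ∩ Cᶜ ∈ 𝓝[X] x :=
          Filter.inter_mem self_mem_nhdsWithin
            (mem_nhdsWithin_of_mem_nhds (hCc.isOpen_compl.mem_nhds hxC))
        have heq : ∀ᶠ z in 𝓝[X] x, χ z = 0 := by
          filter_upwards [hmem] with z hz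
          refine hχ0 z ⟨hz.1, fun hzJ => hz.2 ?_⟩
          have : z ∈ X ∩ C := by rw [← hCeq]; exact hzJ
          exact this.2
        exact ContinuousWithinAt.congr_of_eventuallyEq continuousWithinAt_const heq
          (hχ0 x ⟨hx, hxJ⟩)
    have hχR : Rmem X χ := ⟨hχcont, hχapprox⟩
    have hallpoc : ∀ x ∈ X, PointOfCont X x := by
      intro x hx
      by_cases hxJ : x ∈ J
      · intro y hy hyx
        by_cases hyJ : y ∈ J
        · -- both x and y on the segment : multiply a bump by χ
          have hxJ' := hxJ
          have hyJ' := hyJ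
          rw [hJ] at hxJ' hyJ'
          obtain ⟨s, hs, hxe⟩ := hxJ'
          obtain ⟨u, hu, hye⟩ := hyJ'
          subst hxe
          subst hye
          have hus : u ≠ s := fun h => hyx (by rw [h])
          obtain ⟨g, hgc, ⟨U', hU'o, hU'y, hU'v⟩, hgs, hgb, hgapprox⟩ :=
            bump_exists a b u s hu hs hus
          refine ⟨fun z => g z * χ z, ⟨hgc.continuousOn.mul hχcont, ?_⟩,
            ⟨U', hU'o, hU'y, fun z hz => by
              show g z * χ z = 0
              rw [hU'v z hz.2, zero_mul]⟩,
            by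
              show g (s:ℂ) * χ (s:ℂ) ≠ 0
              rw [hgs, hχ1 _ hxJ, one_mul]; exact one_ne_zero⟩
          intro ε hε
          obtain ⟨P, hP⟩ := hgapprox (ε / 4) (by positivity)
          rw [← hJ] at hP
          obtain ⟨M0, hM0⟩ := hX.exists_bound_of_continuousOn P.continuous.continuousOn
          set M : ℝ := max M0 0 with hM
          have hMnn : (0:ℝ) ≤ M := le_max_right _ _
          have hMb : ∀ z ∈ X, norm (P.eval z) ≤ M := by
            intro z hz
            have h7 := hM0 z hz
            exact le_trans h7 (le_max_left _ _)
          obtain ⟨S, hSr, hS⟩ := hχapprox (ε / (2 * (M + 1))) (by positivity)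
          refine ⟨fun z => P.eval z * S z, RatOn.mul ⟨P, 1, by simp, by simp⟩ hSr, ?_⟩
          intro z hz
          show norm (g z * χ z - P.eval z * S z) ≤ ε
          have hMe : M * (ε / (2 * (M + 1))) ≤ ε / 2 := by
            have h2 : (0:ℝ) < 2 * (M + 1) := by positivity
            rw [mul_comm, div_mul_eq_mul_div, div_le_div_iff₀ h2 two_pos]
            nlinarith [hε.le, hMnn]
          by_cases hzJ : z ∈ J
          · have hz1 : χ z = 1 := hχ1 z hzJ
            have e : g z * χ z - P.eval z * S z
                = (g z - P.eval z) + P.eval z * (χ z - S z) := by rw [hz1]; ring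
            rw [e]
            refine (norm_add_le _ _).trans ?_
            have c1 := hP z hzJ
            have c2 : norm (P.eval z * (χ z - S z)) ≤ M * (ε / (2 * (M + 1))) := by
              rw [norm_mul]
              exact mul_le_mul (hMb z hz) (hS z hz) (norm_nonneg _) hMnn
            linarith
          · have hz0 : χ z = 0 := hχ0 z ⟨hz, hzJ⟩
            have e : g z * χ z - P.eval z * S z = -(P.eval z * (S z - χ z)) := by
              rw [hz0]; ring
            rw [e, norm_neg, norm_mul]
            have c2 : norm (S z - χ z) ≤ ε / (2 * (M + 1)) := by
              rw [norm_sub_rev]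
              exact hS z hz
            have c3 := mul_le_mul (hMb z hz) c2 (norm_nonneg _) hMnn
            linarith
        · -- y ∈ X \ J : take χ itself
          refine ⟨χ, hχR, ⟨Cᶜ, hCc.isOpen_compl, ?_, ?_⟩,
            by rw [hχ1 x hxJ]; exact one_ne_zero⟩
          · exact fun hc => hyJ (by rw [hCeq]; exact ⟨hy, hc⟩)
          · intro z hz
            refine hχ0 z ⟨hz.1, fun hzJ => hz.2 ?_⟩
            have : z ∈ X ∩ C := by rw [← hCeq]; exact hzJ
            exact this.2
      · exact hpoc x ⟨hx, hxJ⟩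
    exact hnotreg (regular_of_poc hX hallpoc)
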